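/- Let r : ℝ → ℝ be continuous with 1 < r⁻ ≤ r(ξ) ≤ r⁺ < ∞ for all ξ, and set r'(ξ) := r(ξ)/(r(ξ)−1). Let S : ℝ × ℝ^{3×3}_sym → ℝ^{3×3}_sym be a continuous map satisfying, for positive constants C₁, C₂, C₃: (growth) |S(ξ,B)| ≤ C₁(|B|^{r(ξ)−1} + 1); (strict monotonicity) (S(ξ,B₁) − S(ξ,B₂)) · (B₁ − B₂) > 0 whenever B₁ ≠ B₂; (coercivity) S(ξ,B) · B ≥ C₂(|B|^{r(ξ)} + |S(ξ,B)|^{r'(ξ)}) − C₃. Let ξ_n → ξ in ℝ, let B ∈ ℝ^{3×3}_sym be fixed, and let (B_n) be a sequence in ℝ^{3×3}_sym such that (S(ξ_n, B_n) − S(ξ_n, B)) · (B_n − B) → 0 as n → ∞. Then B_n → B. -/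

import Mathlib

open Filter

/-- The Frobenius inner product of two `3×3` real matrices. -/
def frob (A B : Matrix (Fin 3) (Fin 3) ℝ) : ℝ := ∑ i, ∑ j, A i j * B i j

/-- The Frobenius norm of a `3×3` real matrix. -/
noncomputable def frobNorm (A : Matrix (Fin 3) (Fin 3) ℝ) : ℝ :=
  Real.sqrt (∑ i, ∑ j, (A i j) ^ 2)

lemma frobNorm_nonneg (A : Matrix (Fin 3) (Fin 3) ℝ) : 0 ≤ frobNorm A :=
  Real.sqrt_nonneg _

lemma frob_abs_le (A B : Matrix (Fin 3) (Fin 3) ℝ) :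
    |frob A B| ≤ frobNorm A * frobNorm B := by
  have hcs := Finset.sum_mul_sq_le_sq_mul_sq Finset.univ
    (fun p : Fin 3 × Fin 3 => A p.1 p.2) (fun p : Fin 3 × Fin 3 => B p.1 p.2)
  rw [Fintype.sum_prod_type' (fun i j => A i j * B i j),
    Fintype.sum_prod_type' (fun i j => (A i j) ^ 2),
    Fintype.sum_prod_type' (fun i j => (B i j) ^ 2)] at hcs
  have h1 : |frob A B| = Real.sqrt ((frob A B) ^ 2) := (Real.sqrt_sq_eq_abs _).symm
  rw [h1, frobNorm, frobNorm, ← Real.sqrt_mul (by positivity)]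
  exact Real.sqrt_le_sqrt hcs

lemma frob_le (A B : Matrix (Fin 3) (Fin 3) ℝ) :
    frob A B ≤ frobNorm A * frobNorm B :=
  (le_abs_self _).trans (frob_abs_le A B)

lemma neg_frob_le (A B : Matrix (Fin 3) (Fin 3) ℝ) :
    -frob A B ≤ frobNorm A * frobNorm B :=
  (neg_le_abs _).trans (frob_abs_le A B)

lemma entry_le_frobNorm (A : Matrix (Fin 3) (Fin 3) ℝ) (i j : Fin 3) :
    |A i j| ≤ frobNorm A := by
  rw [← Real.sqrt_sq_eq_abs, frobNorm]
  apply Real.sqrt_le_sqrt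
  calc (A i j) ^ 2 ≤ ∑ j', (A i j') ^ 2 :=
        Finset.single_le_sum (f := fun j' => (A i j') ^ 2) (fun _ _ => sq_nonneg _) (Finset.mem_univ j)
    _ ≤ ∑ i', ∑ j', (A i' j') ^ 2 :=
        Finset.single_le_sum (f := fun i' => ∑ j', (A i' j') ^ 2)
          (fun _ _ => Finset.sum_nonneg fun _ _ => sq_nonneg _) (Finset.mem_univ i)

lemma frob_expand (P Q A B : Matrix (Fin 3) (Fin 3) ℝ) :
    frob (P - Q) (A - B) = frob P A - frob P B - frob Q A + frob Q B := by
  simp only [frob, Matrix.sub_apply, sub_mul, mul_sub, Finset.sum_sub_distrib,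
    Finset.sum_add_distrib]
  ring

lemma frobNorm_continuous : Continuous frobNorm := by
  apply Real.continuous_sqrt.comp
  exact continuous_finset_sum _ fun i _ => continuous_finset_sum _ fun j _ =>
    ((continuous_apply j).comp (continuous_apply (A := fun _ : Fin 3 => Fin 3 → ℝ) i)).pow 2

lemma bound_aux (C₂ Cb K D x ρ rm : ℝ) (hC₂ : 0 < C₂) (hCb : 0 ≤ Cb) (hK : 0 ≤ K)
    (hD : 0 ≤ D) (hx : 0 ≤ x) (hrm : 1 < rm) (hρ : rm ≤ ρ)
    (h : C₂ * x ^ ρ ≤ Cb * x ^ (ρ - 1) + K * x + D) :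
    x ≤ max (max 1 (2 * Cb / C₂)) ((2 * (K + D) / C₂) ^ (1 / (rm - 1))) := by
  by_contra hgt
  push_neg at hgt
  rw [max_lt_iff, max_lt_iff] at hgt
  obtain ⟨⟨hx1, hxb⟩, hxq⟩ := hgt
  have hx0 : 0 < x := lt_trans one_pos hx1
  have hx1' : 1 ≤ x := hx1.le
  have hsplit : x ^ ρ = x * x ^ (ρ - 1) := by
    nth_rewrite 2 [← Real.rpow_one x]
    rw [← Real.rpow_add hx0]; ring_nf
  have hmono1 : x ^ (rm - 1) ≤ x ^ (ρ - 1) :=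
    Real.rpow_le_rpow_of_exponent_le hx1' (by linarith)
  have hge1 : (1:ℝ) ≤ x ^ (rm - 1) := by
    calc (1:ℝ) = x ^ (0:ℝ) := (Real.rpow_zero x).symm
    _ ≤ x ^ (rm - 1) := Real.rpow_le_rpow_of_exponent_le hx1' (by linarith)
  have hstep1 : (C₂ * x - Cb) * x ^ (ρ - 1) ≤ K * x + D := by
    have := h
    rw [hsplit] at this
    nlinarith [Real.rpow_nonneg hx (ρ - 1)]
  have hCx : C₂ * x / 2 ≤ C₂ * x - Cb := by
    have : 2 * Cb / C₂ < x := hxb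
    have : 2 * Cb < C₂ * x := by
      rw [div_lt_iff₀ hC₂] at this; linarith
    linarith
  have hstep2 : (C₂ / 2) * x * x ^ (rm - 1) ≤ (K + D) * x := by
    calc (C₂ / 2) * x * x ^ (rm - 1) ≤ (C₂ / 2) * x * x ^ (ρ - 1) := by
          apply mul_le_mul_of_nonneg_left hmono1; positivity
      _ = (C₂ * x / 2) * x ^ (ρ - 1) := by ring
      _ ≤ (C₂ * x - Cb) * x ^ (ρ - 1) := by
          apply mul_le_mul_of_nonneg_right hCx (Real.rpow_nonneg hx _)
      _ ≤ K * x + D := hstep1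
      _ ≤ (K + D) * x := by nlinarith
  have hQ : x ^ (rm - 1) ≤ 2 * (K + D) / C₂ := by
    have h2 : (C₂ / 2 * x ^ (rm - 1)) * x ≤ (K + D) * x := by
      rw [show (C₂ / 2 * x ^ (rm - 1)) * x = C₂ / 2 * x * x ^ (rm - 1) by ring]
      exact hstep2
    have h3 : C₂ / 2 * x ^ (rm - 1) ≤ K + D := le_of_mul_le_mul_right h2 hx0
    rw [le_div_iff₀ hC₂]
    linarith
  have hfin : x ≤ (2 * (K + D) / C₂) ^ (1 / (rm - 1)) := by
    have h1 : x = (x ^ (rm - 1)) ^ (1 / (rm - 1)) := by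
      rw [← Real.rpow_mul hx]
      rw [mul_one_div, div_self (by linarith : rm - 1 ≠ 0), Real.rpow_one]
    rw [h1]
    exact Real.rpow_le_rpow (Real.rpow_nonneg hx _) hQ
      (le_of_lt (div_pos one_pos (by linarith)))
  exact absurd hfin (not_le.mpr hxq)

set_option maxHeartbeats 1000000 in
/-- For a stress tensor `S(ξ,B)` satisfying growth, strict monotonicity and coercivity with a
continuous variable exponent `r` (with `1 < r⁻ ≤ r ≤ r⁺ < ∞`): if `ξ_n → ξ`, `B` is a fixed
symmetric matrix and `(B_n)` is a sequence of symmetric matrices with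
`(S(ξ_n,B_n) − S(ξ_n,B)) · (B_n − B) → 0`, then `B_n → B`. -/
theorem monotone_stress_convergence
    (r : ℝ → ℝ) (hrcont : Continuous r) (rm rp : ℝ) (hrm : 1 < rm)
    (hbd : ∀ ξ : ℝ, rm ≤ r ξ ∧ r ξ ≤ rp)
    (S : ℝ → Matrix (Fin 3) (Fin 3) ℝ → Matrix (Fin 3) (Fin 3) ℝ)
    (hScont : Continuous fun p : ℝ × Matrix (Fin 3) (Fin 3) ℝ => S p.1 p.2)
    (C₁ C₂ C₃ : ℝ) (hC₁ : 0 < C₁) (hC₂ : 0 < C₂) (hC₃ : 0 < C₃)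
    (hgrowth : ∀ (ξ : ℝ) (B : Matrix (Fin 3) (Fin 3) ℝ), B.IsSymm →
      frobNorm (S ξ B) ≤ C₁ * (frobNorm B ^ (r ξ - 1) + 1))
    (hmono : ∀ (ξ : ℝ) (B₁ B₂ : Matrix (Fin 3) (Fin 3) ℝ), B₁.IsSymm → B₂.IsSymm →
      B₁ ≠ B₂ → 0 < frob (S ξ B₁ - S ξ B₂) (B₁ - B₂))
    (hcoer : ∀ (ξ : ℝ) (B : Matrix (Fin 3) (Fin 3) ℝ), B.IsSymm →
      C₂ * (frobNorm B ^ (r ξ) + frobNorm (S ξ B) ^ (r ξ / (r ξ - 1))) - C₃ ≤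
        frob (S ξ B) B)
    (ξseq : ℕ → ℝ) (ξ : ℝ) (hξ : Tendsto ξseq atTop (nhds ξ))
    (B : Matrix (Fin 3) (Fin 3) ℝ) (hB : B.IsSymm)
    (Bseq : ℕ → Matrix (Fin 3) (Fin 3) ℝ) (hBseq : ∀ n, (Bseq n).IsSymm)
    (hconv : Tendsto
      (fun n => frob (S (ξseq n) (Bseq n) - S (ξseq n) B) (Bseq n - B)) atTop (nhds 0)) :
    Tendsto Bseq atTop (nhds B) := by
  have hb : (0:ℝ) ≤ frobNorm B := frobNorm_nonneg B
  set b := frobNorm B with hbdef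
  -- continuity of the pairing map
  have hgc : Continuous fun p : ℝ × Matrix (Fin 3) (Fin 3) ℝ =>
      frob (S p.1 p.2 - S p.1 B) (p.2 - B) := by
    unfold frob
    apply continuous_finset_sum; intro i _
    apply continuous_finset_sum; intro j _
    have h1 : Continuous fun p : ℝ × Matrix (Fin 3) (Fin 3) ℝ => S p.1 p.2 i j :=
      (continuous_apply j).comp
        ((continuous_apply (A := fun _ : Fin 3 => Fin 3 → ℝ) i).comp hScont)
    have h2 : Continuous fun p : ℝ × Matrix (Fin 3) (Fin 3) ℝ => S p.1 B i j :=
      h1.comp (continuous_fst.prodMk continuous_const)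
    have h3 : Continuous fun p : ℝ × Matrix (Fin 3) (Fin 3) ℝ => p.2 i j :=
      (continuous_apply j).comp
        ((continuous_apply (A := fun _ : Fin 3 => Fin 3 → ℝ) i).comp continuous_snd)
    simp only [Matrix.sub_apply]
    exact (h1.sub h2).mul (h3.sub continuous_const)
  -- bound on frobNorm (S (ξseq n) B)
  have hSB : Tendsto (fun n => frobNorm (S (ξseq n) B)) atTop (nhds (frobNorm (S ξ B))) := by
    exact (frobNorm_continuous.tendsto _).comp
      ((hScont.tendsto (ξ, B)).comp (hξ.prodMk_nhds tendsto_const_nhds))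
  obtain ⟨K, hKub⟩ := hSB.bddAbove_range
  have hK : ∀ n, frobNorm (S (ξseq n) B) ≤ K := fun n => hKub ⟨n, rfl⟩
  have hK0 : (0:ℝ) ≤ K := le_trans (frobNorm_nonneg _) (hK 0)
  -- bound on the error term
  obtain ⟨E, hEub⟩ := hconv.bddAbove_range
  have hE : ∀ n, frob (S (ξseq n) (Bseq n) - S (ξseq n) B) (Bseq n - B) ≤ E :=
    fun n => hEub ⟨n, rfl⟩
  have hE0 : (0:ℝ) ≤ E := by
    refine le_trans ?_ (hE 0)
    by_cases h : Bseq 0 = B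
    · simp [h, frob]
    · exact (hmono (ξseq 0) (Bseq 0) B (hBseq 0) hB h).le
  set D := E + C₁ * b + K * b + C₃ with hDdef
  have hD0 : (0:ℝ) ≤ D := by
    have h1 := mul_nonneg hC₁.le hb
    have h2 := mul_nonneg hK0 hb
    simp only [hDdef]; linarith
  -- main per-n inequality
  have main : ∀ n, C₂ * (frobNorm (Bseq n)) ^ (r (ξseq n)) ≤
      (C₁ * b) * (frobNorm (Bseq n)) ^ (r (ξseq n) - 1) + K * frobNorm (Bseq n) + D := by
    intro n
    set ρ := r (ξseq n) with hρdef
    set x := frobNorm (Bseq n) with hxdef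
    have hx0 : (0:ℝ) ≤ x := frobNorm_nonneg _
    have h1 : C₂ * x ^ ρ - C₃ ≤ frob (S (ξseq n) (Bseq n)) (Bseq n) := by
      have hco := hcoer (ξseq n) (Bseq n) (hBseq n)
      have hnn : 0 ≤ frobNorm (S (ξseq n) (Bseq n)) ^ (ρ / (ρ - 1)) :=
        Real.rpow_nonneg (frobNorm_nonneg _) _
      nlinarith [hco]
    have hexp := frob_expand (S (ξseq n) (Bseq n)) (S (ξseq n) B) (Bseq n) B
    have hgr := hgrowth (ξseq n) (Bseq n) (hBseq n)
    have e1 : frob (S (ξseq n) (Bseq n)) B ≤ (C₁ * b) * x ^ (ρ - 1) + C₁ * b := by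
      calc frob (S (ξseq n) (Bseq n)) B ≤ frobNorm (S (ξseq n) (Bseq n)) * b :=
            frob_le _ _
        _ ≤ (C₁ * (x ^ (ρ - 1) + 1)) * b := mul_le_mul_of_nonneg_right hgr hb
        _ = (C₁ * b) * x ^ (ρ - 1) + C₁ * b := by ring
    have e2 : frob (S (ξseq n) B) (Bseq n) ≤ K * x :=
      calc frob (S (ξseq n) B) (Bseq n) ≤ frobNorm (S (ξseq n) B) * x := frob_le _ _
        _ ≤ K * x := mul_le_mul_of_nonneg_right (hK n) hx0
    have e3 : -frob (S (ξseq n) B) B ≤ K * b :=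
      calc -frob (S (ξseq n) B) B ≤ frobNorm (S (ξseq n) B) * b := neg_frob_le _ _
        _ ≤ K * b := mul_le_mul_of_nonneg_right (hK n) hb
    have e4 := hE n
    simp only [hDdef]
    linarith [h1, hexp, e1, e2, e3, e4]
  -- uniform bound
  set M := max (max 1 (2 * (C₁ * b) / C₂)) ((2 * (K + D) / C₂) ^ (1 / (rm - 1))) with hMdef
  have hM : ∀ n, frobNorm (Bseq n) ≤ M := fun n =>
    bound_aux C₂ (C₁ * b) K D _ _ rm hC₂ (mul_nonneg hC₁.le hb) hK0 hD0
      (frobNorm_nonneg _) hrm (hbd (ξseq n)).1 (main n)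
  -- compactness
  have hKc : IsCompact (Set.univ.pi fun _ : Fin 3 =>
      Set.univ.pi fun _ : Fin 3 => Set.Icc (-M) M) :=
    isCompact_univ_pi fun _ => isCompact_univ_pi fun _ => isCompact_Icc
  have hmem : ∀ n, (Bseq n : Fin 3 → Fin 3 → ℝ) ∈ (Set.univ.pi fun _ : Fin 3 =>
      Set.univ.pi fun _ : Fin 3 => Set.Icc (-M) M) := by
    intro n
    intro i _ j _
    rw [Set.mem_Icc]
    have := (entry_le_frobNorm (Bseq n) i j).trans (hM n)
    exact abs_le.mp this
  apply Filter.tendsto_of_subseq_tendsto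
  intro ns hns
  obtain ⟨a, _, φ, hφ, hconv'⟩ :=
    IsCompact.tendsto_subseq (X := Fin 3 → Fin 3 → ℝ)
      (x := fun k => (Bseq (ns k) : Fin 3 → Fin 3 → ℝ)) hKc (fun k => hmem (ns k))
  refine ⟨φ, ?_⟩
  obtain ⟨a', ha'⟩ : ∃ a' : Matrix (Fin 3) (Fin 3) ℝ, a' = (a : Fin 3 → Fin 3 → ℝ) := ⟨a, rfl⟩
  have hconvM : Tendsto (fun k => Bseq (ns (φ k))) atTop (nhds a') := ha' ▸ hconv'
  suffices h : a' = B by rw [← h]; exact hconvM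
  -- a is symmetric
  have htr : Continuous (Matrix.transpose :
      Matrix (Fin 3) (Fin 3) ℝ → Matrix (Fin 3) (Fin 3) ℝ) := by
    refine continuous_pi fun i => continuous_pi fun j => ?_
    exact (continuous_apply i).comp (continuous_apply (A := fun _ : Fin 3 => Fin 3 → ℝ) j)
  have hsym : a'.IsSymm := by
    have h1 : Tendsto (fun k => Matrix.transpose (Bseq (ns (φ k)))) atTop
        (nhds (Matrix.transpose a')) :=
      (htr.tendsto _).comp hconvM
    have h2 : (fun k => Matrix.transpose (Bseq (ns (φ k)))) = fun k => Bseq (ns (φ k)) :=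
      funext fun k => hBseq _
    rw [h2] at h1
    exact tendsto_nhds_unique h1 hconvM
  -- the limit kills the pairing
  have hngφ : Tendsto (fun k => ns (φ k)) atTop atTop := hns.comp hφ.tendsto_atTop
  have hpair : Tendsto (fun k => (ξseq (ns (φ k)), Bseq (ns (φ k)))) atTop (nhds (ξ, a')) :=
    (hξ.comp hngφ).prodMk_nhds hconvM
  have hz := (hgc.tendsto (ξ, a')).comp hpair
  have hz' := Filter.Tendsto.congr
    (f₂ := fun k => frob (S (ξseq (ns (φ k))) (Bseq (ns (φ k))) - S (ξseq (ns (φ k))) B)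
      (Bseq (ns (φ k)) - B)) (fun k => rfl) hz
  have hz0 := hconv.comp hngφ
  have hz0' := Filter.Tendsto.congr
    (f₂ := fun k => frob (S (ξseq (ns (φ k))) (Bseq (ns (φ k))) - S (ξseq (ns (φ k))) B)
      (Bseq (ns (φ k)) - B)) (fun k => rfl) hz0
  have hga : frob (S ξ a' - S ξ B) (a' - B) = 0 := tendsto_nhds_unique hz' hz0'
  by_contra hne
  exact absurd hga (ne_of_gt (hmono ξ a' B hsym hB hne))
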